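/- Let n, m ≥ 1, let G be a bipartite graph with variable nodes x_1,...,x_n and check nodes a_1,...,a_m, let A ∈ F_q^{m×n} be a matrix whose support is contained in the adjacency of G (A_{ij} ≠ 0 only if a_i x_j ∈ E(G)). Let G* be the 2-core of G (obtained by iteratively deleting a variable node of degree ≤ 1 together with its adjacent check node, if any), with n* variable nodes and m* check nodes. Then nul(A) ≥ n - n* - (m - m*). -/

import Mathlib

/-- The nullity of a matrix over a field: dimension of its kernel. -/
noncomputable def nullity {F : Type*} [Field F] {α β : Type*} [Fintype α] [Fintype β]
    (A : Matrix α β F) : ℕ :=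
  Module.finrank F (LinearMap.ker A.mulVecLin)

/-- The graph-theoretic 2-core bound on the nullity: if `A` is supported on the
bipartite (Tanner) graph `E` between `m` check nodes and `n` variable nodes, and
`(V*, C*)` is the 2-core of the graph — so every variable node of `V*` has at least
two neighbours in `C*` and every check node of `C*` has all its neighbours in `V*` —
then `nul(A) ≥ n - n* - (m - m*)` where `n* = |V*|`, `m* = |C*|`. -/
theorem stmt_17 {F : Type} [Field F] [Fintype F] [DecidableEq F]
    (m n : ℕ) (hm : 1 ≤ m) (hn : 1 ≤ n)
    (E : Fin m → Fin n → Prop)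
    (A : Matrix (Fin m) (Fin n) F)
    (hsupp : ∀ a j, A a j ≠ 0 → E a j)
    (Vstar : Finset (Fin n)) (Cstar : Finset (Fin m))
    (hVdeg : ∀ j ∈ Vstar, ∃ a ∈ Cstar, ∃ b ∈ Cstar, a ≠ b ∧ E a j ∧ E b j)
    (hCcl : ∀ a ∈ Cstar, ∀ j : Fin n, E a j → j ∈ Vstar) :
    (n : ℤ) - Vstar.card - ((m : ℤ) - Cstar.card) ≤ (nullity A : ℤ) := by
  classical
  -- submodules spanned by standard basis vectors in Vstar and rows outside Cstar
  set W1 : Submodule F (Fin n → F) :=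
    Submodule.span F ↑(Vstar.image fun j => (Pi.single j 1 : Fin n → F)) with hW1
  set W2 : Submodule F (Fin n → F) :=
    Submodule.span F ↑(Cstarᶜ.image fun a => A a) with hW2
  have hle : Submodule.span F (Set.range A) ≤ W1 ⊔ W2 := by
    rw [Submodule.span_le]
    rintro _ ⟨a, rfl⟩
    by_cases ha : a ∈ Cstar
    · apply Submodule.mem_sup_left
      have hrow : A a = ∑ j ∈ Vstar, A a j • (Pi.single j 1 : Fin n → F) := by
        funext k
        by_cases hk : k ∈ Vstar
        · simp [Finset.sum_apply, Pi.single_apply, Finset.sum_ite_eq', hk]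
        · have hz : A a k = 0 := by
            by_contra h
            exact hk (hCcl a ha k (hsupp a k h))
          simp [Finset.sum_apply, Pi.single_apply, Finset.sum_ite_eq', hk, hz]
      rw [hrow]
      exact Submodule.sum_mem _ fun j hj => Submodule.smul_mem _ _
        (Submodule.subset_span (by simp; exact ⟨j, hj, rfl⟩))
    · exact Submodule.mem_sup_right
        (Submodule.subset_span (by simp; exact ⟨a, ha, rfl⟩))
  have h1 : Module.finrank F W1 ≤ Vstar.card :=
    le_trans (finrank_span_finset_le_card _) (Finset.card_image_le)
  have h2 : Module.finrank F W2 ≤ Cstarᶜ.card :=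
    le_trans (finrank_span_finset_le_card _) (Finset.card_image_le)
  have hrank : A.rank ≤ Vstar.card + Cstarᶜ.card := by
    rw [← Matrix.rank_transpose A, Matrix.rank_eq_finrank_span_cols, Matrix.col_transpose]
    calc Module.finrank F (Submodule.span F (Set.range A))
        ≤ Module.finrank F ↑(W1 ⊔ W2) := Submodule.finrank_mono hle
      _ ≤ Module.finrank F W1 + Module.finrank F W2 :=
          Submodule.finrank_add_le_finrank_add_finrank _ _
      _ ≤ Vstar.card + Cstarᶜ.card := add_le_add h1 h2
  have hnull : nullity A + A.rank = n := by
    have h := LinearMap.finrank_range_add_finrank_ker A.mulVecLin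
    rw [Module.finrank_fin_fun] at h
    unfold nullity
    rw [Matrix.rank] at hrank ⊢
    omega
  have hcompl : Cstarᶜ.card = m - Cstar.card := by
    rw [Finset.card_compl, Fintype.card_fin]
  have hCle : Cstar.card ≤ m := by
    simpa using Finset.card_le_card (Finset.subset_univ Cstar)
  omega
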